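/- Let G be a nilpotent group and N a subgroup such that G^m ≤ N·G' for some positive integer m (G^m denoting the subgroup generated by all m-th powers). Then there exists a positive integer n whose prime divisors all divide m such that G^n ≤ N. -/

import Mathlib

/-- The subgroup generated by all `n`-th powers. -/
def subgroupPow (G : Type*) [Group G] (n : ℕ) : Subgroup G :=
  Subgroup.closure {x : G | ∃ g : G, x = g ^ n}

open Subgroup
open commutatorElement

lemma subgroupPow_le_iff {G : Type*} [Group G] {n : ℕ} {H : Subgroup G} :
    subgroupPow G n ≤ H ↔ ∀ g : G, g ^ n ∈ H := by
  rw [subgroupPow, Subgroup.closure_le]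
  constructor
  · intro h g; exact h ⟨g, rfl⟩
  · rintro h x ⟨g, rfl⟩; exact h g

lemma map_subgroupPow {G H : Type*} [Group G] [Group H] (f : G →* H)
    (hf : Function.Surjective f) (n : ℕ) :
    (subgroupPow G n).map f = subgroupPow H n := by
  rw [subgroupPow, subgroupPow, MonoidHom.map_closure]
  congr 1
  ext y
  constructor
  · rintro ⟨x, ⟨g, rfl⟩, rfl⟩; exact ⟨f g, map_pow f g n⟩
  · rintro ⟨h, rfl⟩
    obtain ⟨g, rfl⟩ := hf h
    exact ⟨g ^ n, ⟨g, rfl⟩, map_pow f g n⟩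

lemma lcs_le_map_of_surjective {G H : Type*} [Group G] [Group H] (f : G →* H)
    (hf : Function.Surjective f) (n : ℕ) :
    Subgroup.lowerCentralSeries (⊤ : Subgroup H) n ≤ (Subgroup.lowerCentralSeries (⊤ : Subgroup G) n).map f := by
  induction n with
  | zero => simp [Subgroup.map_top_of_surjective f hf]
  | succ n ih =>
    rw [Subgroup.lowerCentralSeries_succ, Subgroup.commutator_def, Subgroup.closure_le]
    rintro x ⟨p, hp, q, -, rfl⟩
    obtain ⟨p', hp', rfl⟩ := ih hp
    obtain ⟨q', rfl⟩ := hf q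
    refine ⟨p' * q' * p'⁻¹ * q'⁻¹, ?_, by simp [commutatorElement_def]⟩
    have : ⁅p', q'⁆ ∈ Subgroup.lowerCentralSeries (⊤ : Subgroup G) (n + 1) := by
      rw [Subgroup.lowerCentralSeries_succ]
      exact Subgroup.subset_closure ⟨p', hp', q', Subgroup.mem_top q', rfl⟩
    simpa [commutatorElement_def] using this

/-- commutator with a product whose second factor is central. -/
lemma comm_mul_central {G : Type*} [Group G] (a u z : G) (hz : ∀ g, Commute z g) :
    ⁅a, u * z⁆ = ⁅a, u⁆ := by
  simp only [commutatorElement_def, mul_inv_rev]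
  have h1 : z * a⁻¹ = a⁻¹ * z := (hz a⁻¹).eq
  calc a * (u * z) * a⁻¹ * (z⁻¹ * u⁻¹)
      = a * u * (z * a⁻¹) * z⁻¹ * u⁻¹ := by group
    _ = a * u * (a⁻¹ * z) * z⁻¹ * u⁻¹ := by rw [h1]
    _ = a * u * a⁻¹ * u⁻¹ := by group

/-- power linearity in the second argument when the commutators are central. -/
lemma comm_pow_right {G : Type*} [Group G] (a x : G)
    (h : ∀ j : ℕ, ∀ g : G, Commute g ⁅a, x ^ j⁆) (n : ℕ) :
    ⁅a, x ^ n⁆ = ⁅a, x⁆ ^ n := by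
  induction n with
  | zero => simp
  | succ n ih =>
    have key : ⁅a, x ^ (n + 1)⁆ = (a * x * a⁻¹) * ⁅a, x ^ n⁆ * x⁻¹ := by
      simp only [commutatorElement_def, pow_succ']
      group
    have hc := (h n x⁻¹).eq
    calc ⁅a, x ^ (n + 1)⁆ = a * x * a⁻¹ * (⁅a, x ^ n⁆ * x⁻¹) := by rw [key]; group
      _ = a * x * a⁻¹ * (x⁻¹ * ⁅a, x ^ n⁆) := by rw [← hc]
      _ = ⁅a, x⁆ * ⁅a, x ^ n⁆ := by simp only [commutatorElement_def]; group
      _ = ⁅a, x⁆ ^ (n + 1) := by rw [ih, pow_succ']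

/-- power linearity in the first argument when the commutators are central. -/
lemma comm_pow_left {G : Type*} [Group G] (x b : G)
    (h : ∀ j : ℕ, ∀ g : G, Commute g ⁅x ^ j, b⁆) (n : ℕ) :
    ⁅x ^ n, b⁆ = ⁅x, b⁆ ^ n := by
  have h' : ∀ j : ℕ, ∀ g : G, Commute g ⁅b, x ^ j⁆ := by
    intro j g
    have := (h j g).inv_right
    rwa [commutatorElement_inv] at this
  calc ⁅x ^ n, b⁆ = (⁅b, x ^ n⁆)⁻¹ := (commutatorElement_inv b (x ^ n)) ▸ rfl
    _ = (⁅b, x⁆ ^ n)⁻¹ := by rw [comm_pow_right b x h' n]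
    _ = (⁅b, x⁆⁻¹) ^ n := by rw [inv_pow]
    _ = ⁅x, b⁆ ^ n := by rw [commutatorElement_inv]

lemma aux_nilpotent : ∀ (ℓ : ℕ) {G : Type u_1} [Group G],
    Subgroup.lowerCentralSeries (⊤ : Subgroup G) ℓ = ⊥ → ∀ (N : Subgroup G) (m : ℕ), 0 < m →
    subgroupPow G m ≤ N ⊔ commutator G →
    ∃ n : ℕ, 0 < n ∧ (∀ p : ℕ, p.Prime → p ∣ n → p ∣ m) ∧ subgroupPow G n ≤ N := by
  intro ℓ
  induction ℓ with
  | zero =>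
    intro G _ hbot N m hm _
    refine ⟨m, hm, fun p _ hp => hp, subgroupPow_le_iff.2 fun g => ?_⟩
    have : g ^ m ∈ (⊥ : Subgroup G) := by
      rw [← hbot]; exact Subgroup.mem_top _
    rw [Subgroup.mem_bot] at this
    rw [this]; exact N.one_mem
  | succ ℓ ih =>
    intro G _ hbot N m hm h
    cases ℓ with
    | zero =>
      -- G is abelian
      have hcomm : commutator G = ⊥ := by exact hbot
      rw [hcomm, sup_bot_eq] at h
      exact ⟨m, hm, fun p _ hp => hp, h⟩
    | succ k =>
      set Z := Subgroup.lowerCentralSeries (⊤ : Subgroup G) (k + 1) with hZdef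
      -- Z is central
      have hZcentral : ∀ z ∈ Z, ∀ g : G, Commute z g := by
        intro z hz g
        have : ⁅z, g⁆ ∈ Subgroup.lowerCentralSeries (⊤ : Subgroup G) (k + 2) := by
          rw [Subgroup.lowerCentralSeries_succ]
          exact Subgroup.subset_closure ⟨z, hz, g, Subgroup.mem_top g, rfl⟩
        rw [hbot, Subgroup.mem_bot, commutatorElement_def] at this
        have := congrArg (· * g * z) this
        simp only [one_mul] at this
        rw [Commute]; rw [SemiconjBy]
        group at this ⊢
        exact this
      -- commutators of lcs k with anything are central
      have hak : ∀ a ∈ Subgroup.lowerCentralSeries (⊤ : Subgroup G) k, ∀ y : G, ⁅a, y⁆ ∈ Z := by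
        intro a ha y
        rw [hZdef, Subgroup.lowerCentralSeries_succ]
        exact Subgroup.subset_closure ⟨a, ha, y, Subgroup.mem_top y, rfl⟩
      -- the quotient
      let f : G →* G ⧸ Z := QuotientGroup.mk' Z
      have hfsurj : Function.Surjective f := QuotientGroup.mk'_surjective Z
      have hQbot : Subgroup.lowerCentralSeries (⊤ : Subgroup (G ⧸ Z)) (k + 1) = ⊥ := by
        rw [eq_bot_iff]
        refine le_trans (lcs_le_map_of_surjective f hfsurj (k + 1)) ?_
        rintro x ⟨z, hz, rfl⟩
        rw [Subgroup.mem_bot]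
        simpa [f, QuotientGroup.eq_one_iff, -Subgroup.lowerCentralSeries_succ] using hz
      have hQh : subgroupPow (G ⧸ Z) m ≤ N.map f ⊔ commutator (G ⧸ Z) := by
        rw [← map_subgroupPow f hfsurj]
        refine le_trans (Subgroup.map_mono h) ?_
        rw [Subgroup.map_sup]
        apply sup_le_sup_left
        rw [_root_.commutator_def, Subgroup.map_commutator, _root_.commutator_def,
          Subgroup.map_top_of_surjective f hfsurj]
      obtain ⟨n₁, hn₁pos, hn₁p, hn₁le⟩ := ih hQbot (N.map f) m hm hQh
      -- key decomposition
      have key : ∀ g : G, ∃ u ∈ N, ∃ z ∈ Z, g ^ n₁ = u * z := by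
        intro g
        have : f (g ^ n₁) ∈ N.map f := by
          apply hn₁le
          rw [subgroupPow]
          exact Subgroup.subset_closure ⟨f g, by rw [map_pow]⟩
        obtain ⟨u, hu, huv⟩ := this
        refine ⟨u, hu, u⁻¹ * g ^ n₁, ?_, by group⟩
        have : (u : G ⧸ Z) = (g ^ n₁ : G) := huv
        exact QuotientGroup.eq.1 this
      -- the subgroup of elements of Z whose e-th power is in N
      set e := n₁ ^ 2 with hedef
      let T : Subgroup G :=
        { carrier := {z | z ∈ Z ∧ z ^ e ∈ N}
          one_mem' := ⟨Z.one_mem, by simpa using N.one_mem⟩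
          mul_mem' := by
            rintro a b ⟨haZ, haN⟩ ⟨hbZ, hbN⟩
            refine ⟨Z.mul_mem haZ hbZ, ?_⟩
            rw [(hZcentral a haZ b).mul_pow]
            exact N.mul_mem haN hbN
          inv_mem' := by
            rintro a ⟨haZ, haN⟩
            exact ⟨Z.inv_mem haZ, by rw [inv_pow]; exact N.inv_mem haN⟩ }
      have hZT : Z ≤ T := by
        rw [hZdef, Subgroup.lowerCentralSeries_succ, Subgroup.commutator_def, Subgroup.closure_le]
        rintro x ⟨a, ha, g, -, rfl⟩
        have hxc : (a * g * a⁻¹ * g⁻¹ : G) = ⁅a, g⁆ := rfl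
        show ⁅a, g⁆ ∈ (T : Set G)
        refine ⟨hak a ha g, ?_⟩
        -- compute ⁅a, g⁆ ^ e ∈ N
        obtain ⟨u, hu, z, hz, hgz⟩ := key g
        obtain ⟨v, hv, z', hz', haz⟩ := key a
        have h1 : ⁅a, g⁆ ^ n₁ = ⁅a, u⁆ := by
          rw [← comm_pow_right a g (fun j x => ((hZcentral _ (hak a ha (g ^ j)) x).symm)) n₁,
            hgz, comm_mul_central a u z (hZcentral z hz)]
        have h2 : ⁅a, u⁆ ^ n₁ = ⁅v, u⁆ := by
          rw [← comm_pow_left a u (fun j x => ((hZcentral _ (hak _ ((Subgroup.lowerCentralSeries (⊤ : Subgroup G) k).pow_mem ha j) u) x).symm)) n₁,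
            haz]
          have : ⁅v * z', u⁆ = ⁅v, u⁆ := by
            rw [← commutatorElement_inv u (v * z'), comm_mul_central u v z' (hZcentral z' hz'),
              commutatorElement_inv]
          exact this
        rw [show e = n₁ * n₁ from sq n₁, pow_mul, h1, h2]
        exact N.mul_mem (N.mul_mem (N.mul_mem hv hu) (N.inv_mem hv)) (N.inv_mem hu)
      -- conclude with n = n₁ ^ 3
      refine ⟨n₁ ^ 3, pow_pos hn₁pos 3, ?_, ?_⟩
      · intro p hp hpd
        exact hn₁p p hp (hp.dvd_of_dvd_pow hpd)
      · rw [subgroupPow_le_iff]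
        intro g
        obtain ⟨u, hu, z, hz, hgz⟩ := key g
        have : g ^ n₁ ^ 3 = (g ^ n₁) ^ e := by
          rw [← pow_mul, show n₁ * e = n₁ ^ 3 by rw [hedef]; ring]
        rw [this, hgz, (hZcentral z hz u).symm.mul_pow]
        exact N.mul_mem (N.pow_mem hu e) ((hZT hz).2)

/-- If `G` is nilpotent, `N ≤ G` and `G^m ≤ N·G'` for some `m > 0`, then there is an
`n > 0` all of whose prime divisors divide `m` with `G^n ≤ N`. -/
theorem stmt1 {G : Type*} [Group G] [Group.IsNilpotent G] (N : Subgroup G)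
    (m : ℕ) (hm : 0 < m) (h : subgroupPow G m ≤ N ⊔ commutator G) :
    ∃ n : ℕ, 0 < n ∧ (∀ p : ℕ, p.Prime → p ∣ n → p ∣ m) ∧ subgroupPow G n ≤ N := by
  exact aux_nilpotent (Group.nilpotencyClass G) Subgroup.lowerCentralSeries_nilpotencyClass N m hm h
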